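/- For any integers s, t ≥ 2, the grid graph G = P_s □ P_t is (s+t−2)-metric dimensional; that is, G has an (s+t−2)-resolving set but no (s+t−1)-resolving set. -/

import Mathlib

open SimpleGraph Finset
set_option maxHeartbeats 1000000
set_option linter.all false

lemma card_filter_val (n a b : ℕ) (hb : b ≤ n) :
    (univ.filter fun x : Fin n => a ≤ x.val ∧ x.val < b).card = b - a := by
  rw [← Nat.card_Ico a b]
  apply Finset.card_bij (fun x _ => x.val)
  · intro x hx; simp at hx ⊢; omega
  · intro x hx y hy hxy; exact Fin.ext hxy
  · intro c hc
    simp at hc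
    exact ⟨⟨c, by omega⟩, by simp; omega, rfl⟩

lemma arith1 (s t a a' b b' δ N : ℕ)
    (h1 : a + a' + δ + 4 = s + 2) (h2 : b + b' + δ + 4 ≤ t + 2)
    (hN : N ≤ (a+1)*(b+1) + (a'+1)*(b'+1) + δ) : N + s + t ≤ s*t + 2 := by
  nlinarith [Nat.zero_le (a*b'), Nat.zero_le (a'*b), sq_nonneg δ, Nat.zero_le (δ*(a+a'+b+b'))]

lemma arith2 (s t N : ℕ) (hs : 2 ≤ s) (ht : 2 ≤ t) (hN : N ≤ s) : N + s + t ≤ s*t + 2 := by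
  nlinarith

def Zset (s t : ℕ) (i g : Fin s) (j h : Fin t) : Finset (Fin s × Fin t) :=
  univ.filter fun p =>
    Nat.dist p.1.val i.val + Nat.dist p.2.val j.val
      = Nat.dist p.1.val g.val + Nat.dist p.2.val h.val

lemma lemmaA (s t : ℕ) (hs : 2 ≤ s) (ht : 2 ≤ t) (i g : Fin s) (j h : Fin t)
    (hig : i.val < g.val) (hjh : j ≠ h)
    (hde : g.val - i.val ≤ Nat.dist j.val h.val) :
    (Zset s t i g j h).card + s + t ≤ s*t + 2 := by
  have hjh' : j.val ≠ h.val := fun hc => hjh (Fin.ext hc)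
  set d := g.val - i.val with hd
  set e := Nat.dist j.val h.val with he
  set Z := Zset s t i g j h with hZ
  have hmemZ : ∀ p : Fin s × Fin t, p ∈ Z ↔
      Nat.dist p.1.val i.val + Nat.dist p.2.val j.val
        = Nat.dist p.1.val g.val + Nat.dist p.2.val h.val := by
    intro p; rw [hZ]; unfold Zset; simp
  clear_value Z
  set Z1 := Z.filter (fun p => p.1.val ≤ i.val) with hZ1
  set Z2 := Z.filter (fun p => g.val ≤ p.1.val) with hZ2
  set Z3 := Z.filter (fun p => i.val < p.1.val ∧ p.1.val < g.val) with hZ3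
  clear_value Z1 Z2 Z3
  have hcover : Z ⊆ Z1 ∪ Z2 ∪ Z3 := by
    intro p hp
    simp only [hZ1, hZ2, hZ3, Finset.mem_union, Finset.mem_filter, hp, true_and]
    omega
  have hcard3 : Z.card ≤ Z1.card + Z2.card + Z3.card :=
    le_trans (Finset.card_le_card hcover)
      (le_trans (Finset.card_union_le _ _) (by gcongr; exact Finset.card_union_le _ _))
  set Y1 := (univ : Finset (Fin t)).filter
      (fun y => Nat.dist y.val j.val = Nat.dist y.val h.val + d) with hY1
  set Y2 := (univ : Finset (Fin t)).filter
      (fun y => Nat.dist y.val h.val = Nat.dist y.val j.val + d) with hY2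
  clear_value Y1 Y2
  -- Z1 bound
  have hZ1sub : Z1 ⊆ ((univ : Finset (Fin s)).filter (fun x => 0 ≤ x.val ∧ x.val < i.val + 1)) ×ˢ Y1 := by
    intro p hp
    simp only [hZ1, Finset.mem_filter, hmemZ] at hp
    simp only [Finset.mem_product, Finset.mem_filter, Finset.mem_univ, true_and, hY1]
    simp only [Nat.dist] at hp ⊢
    omega
  have hc1 : Z1.card ≤ (i.val + 1) * Y1.card := by
    refine le_trans (Finset.card_le_card hZ1sub) ?_
    rw [Finset.card_product, card_filter_val s 0 (i.val+1) (by omega)]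
    simp
  have hZ2sub : Z2 ⊆ ((univ : Finset (Fin s)).filter (fun x => g.val ≤ x.val ∧ x.val < s)) ×ˢ Y2 := by
    intro p hp
    simp only [hZ2, Finset.mem_filter, hmemZ] at hp
    simp only [Finset.mem_product, Finset.mem_filter, Finset.mem_univ, true_and, hY2]
    have := p.1.isLt
    simp only [Nat.dist] at hp ⊢
    omega
  have hc2 : Z2.card ≤ (s - g.val) * Y2.card := by
    refine le_trans (Finset.card_le_card hZ2sub) ?_
    rw [Finset.card_product, card_filter_val s g.val s le_rfl]
  -- Z3 bound
  have hc3 : Z3.card ≤ d - 1 := by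
    have hle : Z3.card ≤ ((univ : Finset (Fin s)).filter
        (fun x => i.val + 1 ≤ x.val ∧ x.val < g.val)).card := by
      apply Finset.card_le_card_of_injOn (fun p => p.1)
      · intro p hp
        simp only [hZ3, Finset.mem_coe, Finset.mem_filter] at hp
        simp only [Finset.mem_coe, Finset.mem_filter, Finset.mem_univ, true_and]
        omega
      · intro p hp q hq hpq
        have hpq' : p.1 = q.1 := hpq
        simp only [hZ3, Finset.mem_coe, Finset.mem_filter, hmemZ] at hp hq
        have h2 : p.2 = q.2 := by
          apply Fin.ext
          rw [← hpq'] at hq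
          simp only [Nat.dist] at hp hq he
          omega
        exact Prod.ext hpq' h2
    rw [card_filter_val s (i.val+1) g.val (by omega)] at hle
    omega
  rcases eq_or_lt_of_le hde with hde' | hde'
  · -- d = e
    have hhY1 : h ∈ Y1 := by
      simp only [hY1, Finset.mem_filter, Finset.mem_univ, true_and]
      simp only [Nat.dist] at he ⊢
      omega
    have hjY2 : j ∈ Y2 := by
      simp only [hY2, Finset.mem_filter, Finset.mem_univ, true_and]
      simp only [Nat.dist] at he ⊢
      omega
    set I := (univ : Finset (Fin t)).filter
        (fun y => min j.val h.val + 1 ≤ y.val ∧ y.val < max j.val h.val) with hI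
    have hIcard : I.card = e - 1 := by
      rw [hI, card_filter_val t _ _ (by omega)]
      simp only [Nat.dist] at he
      omega
    have hdisj12 : Disjoint Y1 Y2 := by
      rw [Finset.disjoint_left]
      intro y hy1 hy2
      simp only [hY1, hY2, Finset.mem_filter] at hy1 hy2
      omega
    have hdisjI : Disjoint (Y1 ∪ Y2) I := by
      rw [Finset.disjoint_left]
      intro y hy1 hyI
      simp only [hY1, hY2, hI, Finset.mem_union, Finset.mem_filter, Finset.mem_univ,
        true_and] at hy1 hyI
      simp only [Nat.dist] at hy1 he hde'
      omega
    have hsum : Y1.card + Y2.card + (e - 1) ≤ t := by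
      have h1 : (Y1 ∪ Y2 ∪ I).card ≤ t := by
        refine le_trans (Finset.card_le_card (Finset.subset_univ _)) ?_
        simp
      rw [Finset.card_union_of_disjoint hdisjI, Finset.card_union_of_disjoint hdisj12,
        hIcard] at h1
      exact h1
    have hb1 : 1 ≤ Y1.card := Finset.card_pos.2 ⟨h, hhY1⟩
    have hb2 : 1 ≤ Y2.card := Finset.card_pos.2 ⟨j, hjY2⟩
    have hde2 : d ≥ 1 := by omega
    have hglt : g.val < s := g.isLt
    apply arith1 s t i.val (s - g.val - 1) (Y1.card - 1) (Y2.card - 1) (d - 1) Z.card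
    · omega
    · omega
    · have e1 : i.val + 1 = i.val + 1 := rfl
      have e2 : s - g.val - 1 + 1 = s - g.val := by omega
      have e3 : Y1.card - 1 + 1 = Y1.card := by omega
      have e4 : Y2.card - 1 + 1 = Y2.card := by omega
      rw [e2, e3, e4]
      omega
  · -- d < e
    have hY1le : Y1.card ≤ 1 := by
      apply Finset.card_le_one.2
      intro y hy y' hy'
      simp only [hY1, Finset.mem_filter] at hy hy'
      apply Fin.ext
      simp only [Nat.dist] at hy hy' he hde'
      omega
    have hY2le : Y2.card ≤ 1 := by
      apply Finset.card_le_one.2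
      intro y hy y' hy'
      simp only [hY2, Finset.mem_filter] at hy hy'
      apply Fin.ext
      simp only [Nat.dist] at hy hy' he hde'
      omega
    apply arith2 s t Z.card hs ht
    have m1 : (i.val + 1) * Y1.card ≤ i.val + 1 := by
      calc (i.val + 1) * Y1.card ≤ (i.val + 1) * 1 := Nat.mul_le_mul_left _ hY1le
      _ = i.val + 1 := by ring
    have m2 : (s - g.val) * Y2.card ≤ s - g.val := by
      calc (s - g.val) * Y2.card ≤ (s - g.val) * 1 := Nat.mul_le_mul_left _ hY2le
      _ = s - g.val := by ring
    have := g.isLt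
    omega

lemma Zset_comm (s t : ℕ) (i g : Fin s) (j h : Fin t) :
    Zset s t i g j h = Zset s t g i h j := by
  unfold Zset
  apply Finset.filter_congr
  intro p _
  constructor <;> (intro h; omega)

lemma Zset_swap (s t : ℕ) (i g : Fin s) (j h : Fin t) :
    (Zset s t i g j h).card = (Zset t s j h i g).card := by
  apply Finset.card_bij (fun p _ => Prod.swap p)
  · intro p hp; unfold Zset at *; simp at hp ⊢; omega
  · intro p _ q _ hpq; exact Prod.swap_injective hpq
  · intro p hp; exact ⟨Prod.swap p, by unfold Zset at *; simp at hp ⊢; omega, by simp⟩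

lemma lemmaB (s t : ℕ) (hs : 2 ≤ s) (ht : 2 ≤ t) (i g : Fin s) (j h : Fin t)
    (hig : i ≠ g) (hjh : j ≠ h)
    (hde : Nat.dist i.val g.val ≤ Nat.dist j.val h.val) :
    (Zset s t i g j h).card + s + t ≤ s*t + 2 := by
  rcases lt_or_gt_of_ne (fun hc => hig (Fin.ext hc) : i.val ≠ g.val) with hlt | hlt
  · exact lemmaA s t hs ht i g j h hlt hjh (by simp only [Nat.dist] at hde ⊢; omega)
  · rw [Zset_comm]
    exact lemmaA s t hs ht g i h j hlt hjh.symm (by simp only [Nat.dist] at hde ⊢; omega)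

lemma Zcard_le (s t : ℕ) (hs : 2 ≤ s) (ht : 2 ≤ t) (i g : Fin s) (j h : Fin t)
    (hne : (i, j) ≠ (g, h)) :
    (Zset s t i g j h).card + s + t ≤ s*t + 2 := by
  by_cases hig : i = g
  · -- then j ≠ h; each x has at most one y
    have hjh : j ≠ h := by
      intro hc; exact hne (by rw [hig, hc])
    have hjh' : j.val ≠ h.val := fun hc => hjh (Fin.ext hc)
    subst hig
    have hcard : (Zset s t i i j h).card ≤ s := by
      have hle : (Zset s t i i j h).card ≤ (univ : Finset (Fin s)).card := by
        apply Finset.card_le_card_of_injOn (fun p => p.1) (fun p _ => Finset.mem_univ _)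
        intro p hp q hq hpq
        have hpq' : p.1 = q.1 := hpq
        simp only [Zset, Finset.mem_coe, Finset.mem_filter] at hp hq
        refine Prod.ext hpq' (Fin.ext ?_)
        obtain ⟨-, hp⟩ := hp
        obtain ⟨-, hq⟩ := hq
        simp only [Nat.dist] at hp hq
        omega
      simpa using hle
    have := arith2 s t (Zset s t i i j h).card hs ht hcard
    exact this
  · by_cases hjh : j = h
    · subst hjh
      have hig' : i.val ≠ g.val := fun hc => hig (Fin.ext hc)
      have hcard : (Zset s t i g j j).card ≤ t := by
        have hle : (Zset s t i g j j).card ≤ (univ : Finset (Fin t)).card := by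
          apply Finset.card_le_card_of_injOn (fun p => p.2) (fun p _ => Finset.mem_univ _)
          intro p hp q hq hpq
          have hpq' : p.2 = q.2 := hpq
          simp only [Zset, Finset.mem_coe, Finset.mem_filter] at hp hq
          refine Prod.ext (Fin.ext ?_) hpq'
          obtain ⟨-, hp⟩ := hp
          obtain ⟨-, hq⟩ := hq
          simp only [Nat.dist] at hp hq
          omega
        simpa using hle
      nlinarith
    · rcases le_or_gt (Nat.dist i.val g.val) (Nat.dist j.val h.val) with hde | hde
      · exact lemmaB s t hs ht i g j h hig hjh hde
      · rw [Zset_swap]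
        have := lemmaB t s ht hs j h i g hjh hig (le_of_lt hde)
        rw [Nat.mul_comm t s] at this
        omega

lemma pathWalk (n : ℕ) : ∀ (m : ℕ) (i k : Fin n), Nat.dist i.val k.val = m →
    ∃ w : (pathGraph n).Walk i k, w.length = m := by
  intro m
  induction m with
  | zero =>
    intro i k h
    have : i = k := Fin.ext (Nat.eq_of_dist_eq_zero h)
    subst this
    exact ⟨SimpleGraph.Walk.nil, rfl⟩
  | succ m ih =>
    intro i k h
    simp [Nat.dist] at h
    rcases lt_or_ge i.val k.val with hlt | hle
    · have hk : i.val + 1 < n := lt_of_le_of_lt hlt k.isLt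
      let i' : Fin n := ⟨i.val + 1, hk⟩
      have hadj : (pathGraph n).Adj i i' := pathGraph_adj.2 (Or.inl rfl)
      obtain ⟨w, hw⟩ := ih i' k (by simp [Nat.dist, i']; omega)
      exact ⟨SimpleGraph.Walk.cons hadj w, by simp [hw]⟩
    · have h1 : 1 ≤ i.val := by omega
      let i' : Fin n := ⟨i.val - 1, by omega⟩
      have hadj : (pathGraph n).Adj i i' := pathGraph_adj.2 (Or.inr (by simp [i']; omega))
      obtain ⟨w, hw⟩ := ih i' k (by simp [Nat.dist, i']; omega)
      exact ⟨SimpleGraph.Walk.cons hadj w, by simp [hw]⟩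

lemma gridWalk_lb {s t : ℕ} {p q : Fin s × Fin t}
    (w : ((pathGraph s).boxProd (pathGraph t)).Walk p q) :
    Nat.dist p.1.val q.1.val + Nat.dist p.2.val q.2.val ≤ w.length := by
  induction w with
  | nil => simp [Nat.dist]
  | cons h w ih =>
    rename_i a b c
    rw [SimpleGraph.Walk.length_cons]
    rcases SimpleGraph.boxProd_adj.1 h with ⟨h1, h2⟩ | ⟨h1, h2⟩
    · rcases pathGraph_adj.1 h1 with h3 | h3 <;>
      · have : a.2.val = b.2.val := by rw [h2]
        simp only [Nat.dist] at *
        omega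
    · rcases pathGraph_adj.1 h1 with h3 | h3 <;>
      · have : a.1.val = b.1.val := by rw [h2]
        simp only [Nat.dist] at *
        omega

lemma grid_dist {s t : ℕ} (p q : Fin s × Fin t) :
    ((pathGraph s).boxProd (pathGraph t)).dist p q
      = Nat.dist p.1.val q.1.val + Nat.dist p.2.val q.2.val := by
  obtain ⟨w1, hw1⟩ := pathWalk s _ p.1 q.1 rfl
  obtain ⟨w2, hw2⟩ := pathWalk t _ p.2 q.2 rfl
  have hw : ∃ w : ((pathGraph s).boxProd (pathGraph t)).Walk p q,
      w.length = Nat.dist p.1.val q.1.val + Nat.dist p.2.val q.2.val := by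
    refine ⟨((w1.boxProdLeft (pathGraph t) p.2).append (w2.boxProdRight (pathGraph s) q.1)), ?_⟩
    rw [SimpleGraph.Walk.length_append]
    rw [SimpleGraph.Walk.boxProdLeft, SimpleGraph.Walk.boxProdRight]
    exact congrArg₂ (· + ·) ((SimpleGraph.Walk.length_map _ w1).trans hw1)
      ((SimpleGraph.Walk.length_map _ w2).trans hw2)
  obtain ⟨w, hw⟩ := hw
  refine le_antisymm ?_ ?_
  · rw [← hw]; exact SimpleGraph.dist_le w
  · obtain ⟨w', hw'⟩ := SimpleGraph.Reachable.exists_walk_length_eq_dist ⟨w⟩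
    rw [← hw']
    exact gridWalk_lb w'

lemma grid_filter_count (s t : ℕ) (hs : 2 ≤ s) (ht : 2 ≤ t) (u w : Fin s × Fin t) :
    ((univ : Finset (Fin s × Fin t)).filter
        (fun v => ((pathGraph s).boxProd (pathGraph t)).dist u v
          ≠ ((pathGraph s).boxProd (pathGraph t)).dist w v)).card
      + (Zset s t u.1 w.1 u.2 w.2).card = s * t := by
  have hcongr : ((univ : Finset (Fin s × Fin t)).filter
      (fun v => ((pathGraph s).boxProd (pathGraph t)).dist u v
        ≠ ((pathGraph s).boxProd (pathGraph t)).dist w v))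
      = (univ.filter fun v => ¬ (Nat.dist v.1.val u.1.val + Nat.dist v.2.val u.2.val
          = Nat.dist v.1.val w.1.val + Nat.dist v.2.val w.2.val)) := by
    apply Finset.filter_congr
    intro v _
    rw [grid_dist, grid_dist, Nat.dist_comm u.1.val, Nat.dist_comm u.2.val,
      Nat.dist_comm w.1.val, Nat.dist_comm w.2.val]
  rw [hcongr]
  have := Finset.card_filter_add_card_filter_not
    (s := (univ : Finset (Fin s × Fin t)))
    (p := fun v => Nat.dist v.1.val u.1.val + Nat.dist v.2.val u.2.val
          = Nat.dist v.1.val w.1.val + Nat.dist v.2.val w.2.val)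
  simp only [Finset.card_univ, Fintype.card_prod, Fintype.card_fin] at this
  unfold Zset
  omega




/-- A finset `S` of vertices is a `k`-resolving set for `G`: any two distinct vertices `u, w`
have different distances to at least `k` vertices of `S`. -/
def IsKResolvingSet {V : Type*} [DecidableEq V] (G : SimpleGraph V) (k : ℕ) (S : Finset V) : Prop :=
  ∀ u w : V, u ≠ w → k ≤ (S.filter (fun v => G.dist u v ≠ G.dist w v)).card

/-- For `s, t ≥ 2`, the grid graph `P_s □ P_t` is `(s + t - 2)`-metric dimensional: it has an
`(s + t - 2)`-resolving set but no `(s + t - 1)`-resolving set. -/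
theorem grid_is_kMetricDimensional (s t : ℕ) (hs : 2 ≤ s) (ht : 2 ≤ t) :
    (∃ S : Finset (Fin s × Fin t),
        IsKResolvingSet ((SimpleGraph.pathGraph s).boxProd (SimpleGraph.pathGraph t))
          (s + t - 2) S) ∧
      ¬ ∃ S : Finset (Fin s × Fin t),
        IsKResolvingSet ((SimpleGraph.pathGraph s).boxProd (SimpleGraph.pathGraph t))
          (s + t - 1) S := by
  constructor
  · refine ⟨univ, ?_⟩
    intro u w huw
    have hne : (u.1, u.2) ≠ (w.1, w.2) := by
      intro hc
      exact huw (Prod.ext (congrArg Prod.fst hc) (congrArg Prod.snd hc))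
    have h1 := Zcard_le s t hs ht u.1 w.1 u.2 w.2 hne
    have h2 := grid_filter_count s t hs ht u w
    omega
  · rintro ⟨S, hS⟩
    set u₀ : Fin s × Fin t := (⟨0, by omega⟩, ⟨1, by omega⟩) with hu₀
    set w₀ : Fin s × Fin t := (⟨1, by omega⟩, ⟨0, by omega⟩) with hw₀
    have hne : u₀ ≠ w₀ := by
      intro hc
      have := congrArg (fun p => p.1.val) hc
      simp [hu₀, hw₀] at this
    have hcount : ((univ : Finset (Fin s × Fin t)).filter
        (fun v => ((pathGraph s).boxProd (pathGraph t)).dist u₀ v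
          ≠ ((pathGraph s).boxProd (pathGraph t)).dist w₀ v)).card = s + t - 2 := by
      have heq : ((univ : Finset (Fin s × Fin t)).filter
          (fun v => ((pathGraph s).boxProd (pathGraph t)).dist u₀ v
            ≠ ((pathGraph s).boxProd (pathGraph t)).dist w₀ v))
          = ((univ.filter fun x : Fin s => 1 ≤ x.val ∧ x.val < s) ×ˢ
              (univ.filter fun y : Fin t => 0 ≤ y.val ∧ y.val < 1)) ∪
            ((univ.filter fun x : Fin s => 0 ≤ x.val ∧ x.val < 1) ×ˢ
              (univ.filter fun y : Fin t => 1 ≤ y.val ∧ y.val < t)) := by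
        ext p
        have h1 := p.1.isLt
        have h2 := p.2.isLt
        simp only [Finset.mem_filter, Finset.mem_union, Finset.mem_product, Finset.mem_univ,
          true_and, grid_dist, hu₀, hw₀]
        simp only [Nat.dist]
        omega
      rw [heq, Finset.card_union_of_disjoint, Finset.card_product, Finset.card_product,
        card_filter_val s 1 s le_rfl, card_filter_val s 0 1 (by omega),
        card_filter_val t 0 1 (by omega), card_filter_val t 1 t le_rfl]
      · omega
      · rw [Finset.disjoint_left]
        intro p hp hq
        simp only [Finset.mem_product, Finset.mem_filter, Finset.mem_univ, true_and] at hp hq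
        omega
    have hle : (S.filter
        (fun v => ((pathGraph s).boxProd (pathGraph t)).dist u₀ v
          ≠ ((pathGraph s).boxProd (pathGraph t)).dist w₀ v)).card ≤ s + t - 2 := by
      rw [← hcount]
      exact Finset.card_le_card (Finset.filter_subset_filter _ (Finset.subset_univ S))
    have := hS u₀ w₀ hne
    omega
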